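/- arXiv:1912.03694 — 4 statements merged into one kernel-verified Lean document; each statement's English description precedes it below -/
import Mathlib

section
/- Let a_1, …, a_m be complex numbers and let μ_1, …, μ_m be pairwise distinct complex numbers with |μ_i| ≤ 1 for every i, and define f(n) = Σ_{i=1}^m a_i μ_i^n for integers n ≥ 1. If f(n) is an integer for every integer n ≥ 1, then f is periodic: there exists a positive integer d such that f(n + d) = f(n) for all integers n ≥ 1. -/
/-- Periodicity of integer-valued exponential sums with frequencies of
absolute value at most 1 (used in the proof of Proposition 2.1). -/
theorem integer_valued_exponential_sum_periodic
    {m : ℕ} (a μ : Fin m → ℂ)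
    (hdist : Function.Injective μ)
    (hμ : ∀ i, ‖μ i‖ ≤ 1)
    (f : ℕ → ℂ) (hf : ∀ n, f n = ∑ i, a i * μ i ^ n)
    (hint : ∀ n : ℕ, 1 ≤ n → ∃ z : ℤ, f n = (z : ℂ)) :
    ∃ d : ℕ, 0 < d ∧ ∀ n : ℕ, 1 ≤ n → f (n + d) = f n := by
  classical
  set C : ℝ := ∑ i, ‖a i‖ with hC
  have hbound : ∀ n, ‖f n‖ ≤ C := by
    intro n
    rw [hf n]
    refine le_trans (norm_sum_le _ _) (Finset.sum_le_sum fun i _ => ?_)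
    rw [norm_mul, norm_pow]
    calc ‖a i‖ * ‖μ i‖ ^ n
        ≤ ‖a i‖ * 1 := by
          gcongr
          exact pow_le_one₀ (norm_nonneg _) (hμ i)
      _ = ‖a i‖ := mul_one _
  choose z hz using hint
  set B : ℤ := ⌈C⌉ with hB
  have hzB : ∀ n (hn : 1 ≤ n), -B ≤ z n hn ∧ z n hn ≤ B := by
    intro n hn
    have h1 : (|z n hn| : ℝ) ≤ C := by
      have := hbound n
      rw [hz n hn, Complex.norm_intCast] at this
      exact_mod_cast this
    have h2 : |z n hn| ≤ B := by
      have := le_trans h1 (Int.le_ceil C)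
      exact_mod_cast this
    exact ⟨neg_le_of_abs_le h2, le_of_abs_le h2⟩
  -- pigeonhole on the vector of m consecutive values
  set g : ℕ → (Fin m → ℤ) := fun n k => z (n + 1 + k) (by omega) with hg
  have hmaps : Set.MapsTo g Set.univ ↑(Finset.Icc (fun _ : Fin m => -B) (fun _ => B)) := by
    intro n _
    simp only [Finset.coe_Icc, Set.mem_Icc]
    constructor <;> intro k <;> simp only [hg] <;>
      [exact (hzB _ _).1; exact (hzB _ _).2]
  obtain ⟨n1, -, n2, -, hne, heq⟩ :=
    Set.infinite_univ.exists_ne_map_eq_of_mapsTo hmaps (Finset.Icc _ _).finite_toSet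
  -- wlog n1 < n2
  wlog hlt : n1 < n2 generalizing n1 n2
  · exact this n2 n1 hne.symm heq.symm (by omega)
  set d : ℕ := n2 - n1 with hd
  have hd0 : 0 < d := by omega
  -- values of f coincide
  have hfeq : ∀ k : Fin m, f (n1 + 1 + k) = f (n2 + 1 + k) := by
    intro k
    rw [hz (n1 + 1 + k) (by omega), hz (n2 + 1 + k) (by omega)]
    have : g n1 k = g n2 k := by rw [heq]
    exact_mod_cast this
  -- Vandermonde argument
  set w : ℕ → Fin m → ℂ := fun n i => a i * μ i ^ n with hw
  have hdet : (Matrix.vandermonde μ).transpose.det ≠ 0 := by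
    rw [Matrix.det_transpose, Matrix.det_vandermonde]
    refine Finset.prod_ne_zero_iff.2 fun i _ => Finset.prod_ne_zero_iff.2 fun j hj => ?_
    exact sub_ne_zero_of_ne fun h => (Finset.mem_Ioi.1 hj).ne' (hdist h)
  have hmv : (Matrix.vandermonde μ).transpose.mulVec (w (n1 + 1) - w (n2 + 1)) = 0 := by
    funext k
    have h1 : ∀ n : ℕ, ∑ i, μ i ^ (k : ℕ) * w n i = f (n + k) := by
      intro n
      rw [hf (n + k)]
      refine Finset.sum_congr rfl fun i _ => ?_
      rw [hw]
      simp only [pow_add]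
      ring
    simp only [Matrix.mulVec, Matrix.transpose_apply, Matrix.vandermonde, dotProduct,
      Pi.sub_apply, Matrix.of_apply, Pi.zero_apply, mul_sub, Finset.sum_sub_distrib]
    rw [h1, h1, hfeq k]
    ring
  have hweq : w (n1 + 1) = w (n2 + 1) := by
    have hu : IsUnit (Matrix.vandermonde μ).transpose := by
      rwa [Matrix.isUnit_iff_isUnit_det, isUnit_iff_ne_zero]
    have hinj := Matrix.mulVec_injective_iff_isUnit.2 hu
    have : (Matrix.vandermonde μ).transpose.mulVec (w (n1 + 1) - w (n2 + 1)) =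
        (Matrix.vandermonde μ).transpose.mulVec 0 := by rw [hmv, Matrix.mulVec_zero]
    have := hinj this
    exact sub_eq_zero.1 this
  -- per-index periodicity
  have hper : ∀ i, ∀ n : ℕ, 1 ≤ n → a i * μ i ^ (n + d) = a i * μ i ^ n := by
    intro i n hn
    by_cases ha : a i = 0
    · simp [ha]
    by_cases hμ0 : μ i = 0
    · have h1 : n + d ≠ 0 := by omega
      have h2 : n ≠ 0 := by omega
      rw [hμ0, zero_pow h1, zero_pow h2]
    have hwi : a i * μ i ^ (n1 + 1) = a i * μ i ^ (n2 + 1) := congrFun hweq i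
    have hpow0 : μ i ^ (n1 + 1) = μ i ^ (n2 + 1) := mul_left_cancel₀ ha hwi
    have hpow : μ i ^ (n1 + 1) * 1 = μ i ^ (n1 + 1) * μ i ^ d := by
      rw [mul_one, ← pow_add, hpow0]
      congr 1
      omega
    have hμd : μ i ^ d = 1 := (mul_left_cancel₀ (pow_ne_zero _ hμ0) hpow).symm
    rw [pow_add, hμd, mul_one]
  refine ⟨d, hd0, fun n hn => ?_⟩
  rw [hf (n + d), hf n]
  exact Finset.sum_congr rfl fun i _ => hper i n hn
end

section
/- Let a_1, …, a_m be complex numbers and let μ_1, …, μ_m be pairwise distinct complex numbers with |μ_i| ≤ 1 for every i, and define f(n) = Σ_{i=1}^m a_i μ_i^n for integers n ≥ 1. If f(n) is an integer for every integer n ≥ 1, then for every index i with a_i ≠ 0 and μ_i ≠ 0, the number μ_i is a root of unity (μ_i^d = 1 for some positive integer d). -/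
open Polynomial Finset

/-- Any frequency appearing with nonzero coefficient in an integer-valued
exponential sum with frequencies of absolute value at most 1 is zero
or a root of unity (used in the proof of Proposition 2.1). -/
theorem integer_valued_exponential_sum_frequencies_root_of_unity
    {m : ℕ} (a μ : Fin m → ℂ)
    (hdist : Function.Injective μ)
    (hμ : ∀ i, ‖μ i‖ ≤ 1)
    (f : ℕ → ℂ) (hf : ∀ n, f n = ∑ i, a i * μ i ^ n)
    (hint : ∀ n : ℕ, 1 ≤ n → ∃ z : ℤ, f n = (z : ℂ)) :
    ∀ i, a i ≠ 0 → μ i ≠ 0 → ∃ d : ℕ, 0 < d ∧ μ i ^ d = 1 := by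
  intro i0 ha0 hμ0
  -- characteristic polynomial
  set P : Polynomial ℂ := ∏ i, (X - C (μ i)) with hP
  have hmonic : P.Monic := monic_prod_of_monic _ _ fun i _ => monic_X_sub_C _
  have hdeg : P.natDegree = m := by
    rw [hP, natDegree_prod_of_monic _ _ (fun i _ => monic_X_sub_C _)]
    simp [natDegree_X_sub_C]
  have hroot : ∀ i, P.eval (μ i) = 0 := by
    intro i
    rw [hP, eval_prod]
    exact Finset.prod_eq_zero (mem_univ i) (by simp)
  -- linear recurrence of order m
  have hrec : ∀ n, f (n + m) = -∑ k ∈ range m, P.coeff k * f (n + k) := by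
    intro n
    have h1 : ∑ k ∈ range (m + 1), P.coeff k * f (n + k) = 0 := by
      calc ∑ k ∈ range (m + 1), P.coeff k * f (n + k)
          = ∑ k ∈ range (m + 1), ∑ i, a i * μ i ^ n * (P.coeff k * μ i ^ k) := by
            refine Finset.sum_congr rfl fun k _ => ?_
            rw [hf, Finset.mul_sum]
            refine Finset.sum_congr rfl fun i _ => ?_
            rw [pow_add]; ring
        _ = ∑ i, a i * μ i ^ n * ∑ k ∈ range (m + 1), P.coeff k * μ i ^ k := by
            rw [Finset.sum_comm]
            exact Finset.sum_congr rfl fun i _ => (Finset.mul_sum _ _ _).symm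
        _ = ∑ i, a i * μ i ^ n * P.eval (μ i) := by
            refine Finset.sum_congr rfl fun i _ => ?_
            rw [eval_eq_sum_range, hdeg]
        _ = 0 := by simp [hroot]
    rw [Finset.sum_range_succ] at h1
    have hcm : P.coeff m = 1 := by
      have := hmonic.coeff_natDegree
      rwa [hdeg] at this
    rw [hcm, one_mul] at h1
    exact eq_neg_of_add_eq_zero_right h1
  -- boundedness: |f n| ≤ B
  set B : ℝ := ∑ i, ‖a i‖ with hB
  have hbound : ∀ n : ℕ, ‖f n‖ ≤ B := by
    intro n
    rw [hf]
    refine (norm_sum_le _ _).trans ?_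
    refine Finset.sum_le_sum fun i _ => ?_
    rw [norm_mul, norm_pow]
    calc ‖a i‖ * ‖μ i‖ ^ n
        ≤ ‖a i‖ * 1 := by
          refine mul_le_mul_of_nonneg_left ?_ (norm_nonneg _)
          exact pow_le_one₀ (norm_nonneg _) (hμ i)
      _ = ‖a i‖ := mul_one _
  -- integer values
  have hz : ∀ n : ℕ, ∃ z : ℤ, f (n + 1) = (z : ℂ) ∧ z ∈ Finset.Icc (-⌈B⌉) ⌈B⌉ := by
    intro n
    obtain ⟨z, hz⟩ := hint (n + 1) (Nat.le_add_left 1 n)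
    refine ⟨z, hz, ?_⟩
    have h1 : |(z : ℝ)| ≤ B := by
      have := hbound (n + 1)
      rwa [hz, Complex.norm_intCast] at this
    rw [Finset.mem_Icc]
    constructor
    · have : -B ≤ (z : ℝ) := neg_le_of_abs_le h1
      have h2 : ((-⌈B⌉ : ℤ) : ℝ) ≤ (z : ℝ) := by
        push_cast
        linarith [Int.le_ceil B]
      exact_mod_cast h2
    · have : (z : ℝ) ≤ B := le_of_abs_le h1
      have h2 : ((z : ℤ) : ℝ) ≤ ((⌈B⌉ : ℤ) : ℝ) := by
        linarith [Int.le_ceil B]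
      exact_mod_cast h2
  choose g hg1 hg2 using hz
  -- pigeonhole on windows of length m
  have : ∃ n1 n2 : ℕ, n1 < n2 ∧ ∀ j : Fin m, g (n1 + j) = g (n2 + j) := by
    have hfin : Finite (Fin m → {x // x ∈ Finset.Icc (-⌈B⌉) ⌈B⌉}) := by infer_instance
    obtain ⟨n1, n2, hne, heq⟩ := Finite.exists_ne_map_eq_of_infinite
      (fun n : ℕ => fun j : Fin m => (⟨g (n + j), hg2 (n + j)⟩ :
        {x // x ∈ Finset.Icc (-⌈B⌉) ⌈B⌉}))
    rcases hne.lt_or_gt with h | h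
    · exact ⟨n1, n2, h, fun j => congrArg Subtype.val (congrFun heq j)⟩
    · exact ⟨n2, n1, h, fun j => (congrArg Subtype.val (congrFun heq j)).symm⟩
  obtain ⟨n1, n2, hlt, hwin⟩ := this
  -- window of values of f agree
  have hfwin : ∀ j : Fin m, f (n1 + j + 1) = f (n2 + j + 1) := by
    intro j
    rw [hg1 (n1 + j), hg1 (n2 + j), hwin j]
  -- propagate by the recurrence
  have key : ∀ t : ℕ, f (n1 + 1 + t) = f (n2 + 1 + t) := by
    intro t
    induction t using Nat.strong_induction_on with
    | _ t ih =>
      rcases lt_or_ge t m with h | h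
      · have := hfwin ⟨t, h⟩
        simpa [Nat.add_assoc, Nat.add_comm, Nat.add_left_comm] using this
      · obtain ⟨s, rfl⟩ : ∃ s, t = s + m := ⟨t - m, (Nat.sub_add_cancel h).symm⟩
        have e1 := hrec (n1 + 1 + s)
        have e2 := hrec (n2 + 1 + s)
        rw [show n1 + 1 + (s + m) = n1 + 1 + s + m by ring, e1,
            show n2 + 1 + (s + m) = n2 + 1 + s + m by ring, e2]
        congr 1
        refine Finset.sum_congr rfl fun k hk => ?_
        have hkm : k < m := Finset.mem_range.mp hk
        have hlt' : s + k < s + m := by omega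
        rw [show n1 + 1 + s + k = n1 + 1 + (s + k) by ring,
            show n2 + 1 + s + k = n2 + 1 + (s + k) by ring, ih (s + k) hlt']
  -- deduce vanishing exponential sum and apply Vandermonde
  set p : ℕ := n2 - n1 with hp
  have hppos : 0 < p := by omega
  set N : ℕ := n1 + 1 with hN
  set c : Fin m → ℂ := fun i => a i * μ i ^ N * (1 - μ i ^ p) with hc
  have hvan : ∀ j : Fin m, ∑ i, c i * μ i ^ (j : ℕ) = 0 := by
    intro j
    have h1 : f (N + j) = f (N + j + p) := by
      have := key (j : ℕ)
      have h2 : n2 + 1 + (j : ℕ) = N + j + p := by omega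
      rw [h2] at this
      exact this
    rw [hf, hf] at h1
    have : ∑ i, c i * μ i ^ (j : ℕ)
        = (∑ i, a i * μ i ^ (N + (j : ℕ))) - ∑ i, a i * μ i ^ (N + (j : ℕ) + p) := by
      rw [← Finset.sum_sub_distrib]
      refine Finset.sum_congr rfl fun i _ => ?_
      rw [hc]
      rw [pow_add, pow_add, pow_add]
      ring
    rw [this, h1, sub_self]
  have hc0 : c = 0 := Matrix.eq_zero_of_forall_pow_sum_mul_pow_eq_zero hdist hvan
  have : c i0 = 0 := congrFun hc0 i0
  rw [hc] at this
  have hμN : μ i0 ^ N ≠ 0 := pow_ne_zero _ hμ0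
  have h1 : 1 - μ i0 ^ p = 0 := by
    rcases mul_eq_zero.mp this with h | h
    · rcases mul_eq_zero.mp h with h' | h'
      · exact absurd h' ha0
      · exact absurd h' hμN
    · exact h
  exact ⟨p, hppos, by linear_combination -h1⟩
end

section
/- Let a_1, …, a_m be complex numbers and let μ_1, …, μ_m be pairwise distinct complex numbers with |μ_i| ≤ 1 for every i, and define f(n) = Σ_{i=1}^m a_i μ_i^n for integers n ≥ 1. If f(n) is an integer for every integer n ≥ 1, then for every integer n₀ ≥ 1 one has |f(n₀)| ≤ limsup_{n→∞} |f(n)|. In particular, if there is a real number c such that |f(n)| ≤ c for all sufficiently large n, then |f(1)| ≤ c. -/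
open Filter

/-- Vandermonde-type lemma: if the sums `∑ i, v i * μ i ^ j` vanish for all
`j : Fin m` and the `μ i` are distinct, then `v = 0`. -/
lemma aux_vandermonde {m : ℕ} {μ v : Fin m → ℂ} (hdist : Function.Injective μ)
    (h : ∀ j : Fin m, ∑ i, v i * μ i ^ (j : ℕ) = 0) : v = 0 := by
  apply Matrix.eq_zero_of_mulVec_eq_zero (M := (Matrix.vandermonde μ).transpose)
  · rw [Matrix.det_transpose]
    exact Matrix.det_vandermonde_ne_zero_iff.mpr hdist
  · funext j
    simpa [Matrix.mulVec, dotProduct, Matrix.vandermonde, mul_comm] using h j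

/-- An integer-valued exponential sum with frequencies of absolute value at
most 1 is bounded at every point by the limsup of its absolute values; in
particular an asymptotic bound is a bound at n = 1 (the final step in the
proof of Proposition 2.1). -/
theorem integer_valued_exponential_sum_le_limsup
    {m : ℕ} (a μ : Fin m → ℂ)
    (hdist : Function.Injective μ)
    (hμ : ∀ i, ‖μ i‖ ≤ 1)
    (f : ℕ → ℂ) (hf : ∀ n, f n = ∑ i, a i * μ i ^ n)
    (hint : ∀ n : ℕ, 1 ≤ n → ∃ z : ℤ, f n = (z : ℂ)) :
    (∀ n₀ : ℕ, 1 ≤ n₀ →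
      ‖f n₀‖ ≤ limsup (fun n => ‖f n‖) atTop) ∧
    (∀ c : ℝ, (∀ᶠ n in atTop, ‖f n‖ ≤ c) →
      ‖f 1‖ ≤ c) := by
  -- Boundedness of f
  set C : ℝ := ∑ i, ‖a i‖ with hC
  have hCnonneg : 0 ≤ C := Finset.sum_nonneg fun i _ => (norm_nonneg _)
  have hbound : ∀ n : ℕ, ‖f n‖ ≤ C := by
    intro n
    rw [hf]
    refine le_trans (norm_sum_le _ _) (Finset.sum_le_sum fun i _ => ?_)
    rw [norm_mul, norm_pow]
    exact mul_le_of_le_one_right (norm_nonneg _)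
      (pow_le_one₀ (norm_nonneg _) (hμ i))
  -- Integer values
    -- choose integer values
  have hz : ∀ n : ℕ, 1 ≤ n → ∃ z : ℤ, f n = (z : ℂ) := hint
  set z : ℕ → ℤ := fun n => if h : 1 ≤ n then (hz n h).choose else 0 with hzdef
  have hzeq : ∀ n : ℕ, 1 ≤ n → f n = (z n : ℂ) := by
    intro n hn
    simp only [hzdef, dif_pos hn]
    exact (hz n hn).choose_spec
  set B : ℤ := ⌈C⌉ with hB
  have hzmem : ∀ n : ℕ, z n ∈ Finset.Icc (-B) B := by
    intro n
    by_cases hn : 1 ≤ n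
    · have h1 : |(z n : ℝ)| ≤ C := by
        have := hbound n
        rw [hzeq n hn] at this
        simpa using this
      have h2 : |(z n : ℝ)| ≤ (B : ℝ) := h1.trans (Int.le_ceil C)
      rw [abs_le] at h2
      rw [Finset.mem_Icc]
      constructor
      · exact_mod_cast (by push_cast; linarith : ((-B : ℤ) : ℝ) ≤ (z n : ℝ))
      · exact_mod_cast h2.2
    · simp only [hzdef, dif_neg hn]
      rw [Finset.mem_Icc]
      constructor
      · exact neg_nonpos.mpr (Int.ceil_nonneg hCnonneg)
      · exact Int.ceil_nonneg hCnonneg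
  -- Pigeonhole on windows of length m
  set W : ℕ → (Fin m → (Finset.Icc (-B) B : Finset ℤ)) :=
    fun n i => ⟨z (n + 1 + i), hzmem _⟩ with hW
  obtain ⟨n₁, n₂, hne, heq⟩ := Finite.exists_ne_map_eq_of_infinite W
  -- WLOG n₁ < n₂
  wlog hlt : n₁ < n₂ generalizing n₁ n₂
  · exact this n₂ n₁ hne.symm heq.symm (by omega)
  set T : ℕ := n₂ - n₁ with hT
  have hTpos : 0 < T := by omega
  have hwin : ∀ j : Fin m, f (n₁ + 1 + j) = f (n₂ + 1 + j) := by
    intro j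
    have h1 := congrFun heq j
    have h2 : z (n₁ + 1 + j) = z (n₂ + 1 + j) := Subtype.ext_iff.mp h1
    rw [hzeq _ (by omega), hzeq _ (by omega), h2]
  -- Vandermonde step
  have hv : ∀ i, a i * μ i ^ (n₁ + 1) * (μ i ^ T - 1) = 0 := by
    have := aux_vandermonde (v := fun i => a i * μ i ^ (n₁ + 1) * (μ i ^ T - 1)) hdist ?_
    · intro i; exact congrFun this i
    · intro j
      have h1 := hwin j
      rw [hf, hf] at h1
      have h2 : n₂ + 1 + (j : ℕ) = (n₁ + 1) + (j : ℕ) + T := by omega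
      rw [h2] at h1
      have : ∑ i, (a i * μ i ^ (n₁ + 1 + (j : ℕ) + T) - a i * μ i ^ (n₁ + 1 + (j : ℕ))) = 0 := by
        rw [Finset.sum_sub_distrib, sub_eq_zero]
        exact h1.symm
      rw [← this]
      apply Finset.sum_congr rfl
      intro i _
      simp only [pow_add]
      ring
  -- Periodicity on n ≥ 1
  have hper : ∀ n : ℕ, 1 ≤ n → f (n + T) = f n := by
    intro n hn
    rw [hf, hf, ← sub_eq_zero, ← Finset.sum_sub_distrib]
    apply Finset.sum_eq_zero
    intro i _
    have key : a i * μ i ^ n * (μ i ^ T - 1) = 0 := by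
      by_cases h0 : μ i = 0
      · rw [h0, zero_pow (by omega)]; ring
      · have := hv i
        have hpow : μ i ^ (n₁ + 1) ≠ 0 := pow_ne_zero _ h0
        have h3 : a i * (μ i ^ T - 1) = 0 := by
          rcases mul_eq_zero.mp this with h | h
          · rcases mul_eq_zero.mp h with h' | h'
            · rw [h']; ring
            · exact absurd h' hpow
          · rw [h]; ring
        calc a i * μ i ^ n * (μ i ^ T - 1) = (a i * (μ i ^ T - 1)) * μ i ^ n := by ring
          _ = 0 := by rw [h3]; ring
    have : a i * μ i ^ (n + T) - a i * μ i ^ n = a i * μ i ^ n * (μ i ^ T - 1) := by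
      rw [pow_add]; ring
    rw [this, key]
  -- f (n₀ + k*T) = f n₀
  have hiter : ∀ n₀ : ℕ, 1 ≤ n₀ → ∀ k : ℕ, f (n₀ + k * T) = f n₀ := by
    intro n₀ hn₀ k
    induction k with
    | zero => simp
    | succ k ih =>
      have : n₀ + (k + 1) * T = (n₀ + k * T) + T := by ring
      rw [this, hper _ (by omega), ih]
  constructor
  · intro n₀ hn₀
    apply le_limsup_of_frequently_le
    · rw [frequently_atTop]
      intro N
      refine ⟨n₀ + (N + 1) * T, by nlinarith [hTpos], ?_⟩
      rw [hiter n₀ hn₀]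
    · exact isBoundedUnder_of ⟨C, fun n => hbound n⟩
  · intro c hc
    rw [eventually_atTop] at hc
    obtain ⟨N, hN⟩ := hc
    have h1 : f 1 = f (1 + (N + 1) * T) := (hiter 1 le_rfl (N + 1)).symm
    rw [h1]
    exact hN _ (by nlinarith [hTpos])
end

section
/- Let A be a square complex matrix (indexed by a finite type) all of whose eigenvalues have absolute value at most 1, and suppose that the trace of A^k is an integer for every integer k ≥ 1. Then: (a) the sequence k ↦ Tr(A^k) is periodic, i.e. there is a positive integer d with Tr(A^{k+d}) = Tr(A^k) for all k ≥ 1; (b) every nonzero eigenvalue of A is a root of unity; and (c) |Tr(A)| ≤ limsup_{k→∞} |Tr(A^k)|. -/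
open Filter

section Helpers
open Polynomial Matrix

variable {n : Type*} [Fintype n] [DecidableEq n]

lemma charpoly_eval' (M : Matrix n n ℂ) (x : ℂ) :
    M.charpoly.eval x = (x • (1 : Matrix n n ℂ) - M).det := by
  rw [Matrix.charpoly, _root_.eval_det, matPolyEquiv_charmatrix]
  simp [smul_one_eq_diagonal]

lemma charpoly_roots_card (M : Matrix n n ℂ) :
    M.charpoly.roots.card = Fintype.card n := by
  rw [IsAlgClosed.card_roots_eq_natDegree]
  exact M.charpoly_natDegree_eq_dim

lemma charpoly_prod (M : Matrix n n ℂ) :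
    (M.charpoly.roots.map fun a => X - C a).prod = M.charpoly :=
  prod_multiset_X_sub_C_of_monic_of_roots_card_eq M.charpoly_monic
    (by rw [charpoly_roots_card, M.charpoly_natDegree_eq_dim])

lemma charpoly_pow (A : Matrix n n ℂ) (k : ℕ) (hk : 1 ≤ k) :
    (A ^ k).charpoly = (A.charpoly.roots.map fun m => X - C (m ^ k)).prod := by
  apply Polynomial.funext; intro x
  set N := Fintype.card n with hN
  set μ : Multiset ℂ := A.charpoly.roots with hμ
  set q : ℂ[X] := X ^ k - C x with hq
  have hqm : q.Monic := monic_X_pow_sub_C x (by omega)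
  have hqcard : q.roots.card = k := by
    rw [(Polynomial.splits_iff_card_roots).mp (IsAlgClosed.splits q)]
    exact natDegree_X_pow_sub_C
  have hqprod : (q.roots.map fun y => X - C y).prod = q :=
    prod_multiset_X_sub_C_of_monic_of_roots_card_eq hqm
      (by rw [hqcard]; exact natDegree_X_pow_sub_C.symm)
  set ρ : Multiset ℂ := q.roots with hρ
  -- eval of charpoly A at a point
  have hevalA : ∀ y : ℂ, A.charpoly.eval y = (μ.map fun m => y - m).prod := by
    intro y
    conv_lhs => rw [← charpoly_prod A]
    rw [eval_multiset_prod, Multiset.map_map]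
    simp
    rfl
  -- eval of q at a point
  have hevalq : ∀ m : ℂ, m ^ k - x = (ρ.map fun y => m - y).prod := by
    intro m
    have : q.eval m = (ρ.map fun y => m - y).prod := by
      conv_lhs => rw [← hqprod]
      rw [eval_multiset_prod, Multiset.map_map]
      simp
    simpa [hq] using this
  -- LHS
  have hL1 : ((A ^ k).charpoly).eval x = (x • (1 : Matrix n n ℂ) - A ^ k).det :=
    charpoly_eval' _ x
  have haeval : x • (1 : Matrix n n ℂ) - A ^ k = -(Polynomial.aeval A q) := by
    simp [hq, Algebra.algebraMap_eq_smul_one]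
  have hlmul : Polynomial.aeval A q = (ρ.toList.map fun y => A - y • 1).prod := by
    have h1 : q = ((ρ.toList.map fun y => X - C y) : List ℂ[X]).prod := by
      conv_lhs => rw [← hqprod, ← Multiset.coe_toList ρ]
      rw [Multiset.map_coe, Multiset.prod_coe]
    rw [h1, map_list_prod, List.map_map]
    congr 1
    apply List.map_congr_left
    intro y _
    simp [Algebra.algebraMap_eq_smul_one]
  have hdet : (Polynomial.aeval A q).det = (ρ.map fun y => (A - y • 1).det).prod := by
    rw [hlmul, ← Matrix.coe_detMonoidHom,
      map_list_prod (Matrix.detMonoidHom) (List.map (fun y : ℂ => A - y • 1) ρ.toList),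
      List.map_map]
    conv_rhs => rw [← Multiset.coe_toList ρ, Multiset.map_coe, Multiset.prod_coe]
    rfl
  have hterm : ∀ y : ℂ, (A - y • (1 : Matrix n n ℂ)).det
      = (-1) ^ N * (μ.map fun m => y - m).prod := by
    intro y
    rw [show A - y • (1 : Matrix n n ℂ) = -(y • 1 - A) from (neg_sub _ _).symm, Matrix.det_neg,
      ← charpoly_eval', hevalA]
  have hLHS : ((A ^ k).charpoly).eval x
      = (-1) ^ N * (ρ.map fun y => (-1) ^ N * (μ.map fun m => y - m).prod).prod := by
    rw [hL1, haeval, Matrix.det_neg, hdet]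
    congr 1
    apply congrArg
    exact Multiset.map_congr rfl fun y _ => hterm y
  -- RHS
  have hRHS : ((μ.map fun m => X - C (m ^ k)).prod).eval x
      = (μ.map fun m => -((ρ.map fun y => m - y).prod)).prod := by
    rw [eval_multiset_prod, Multiset.map_map]
    apply congrArg
    apply Multiset.map_congr rfl
    intro m _
    simp [← hevalq m]
  rw [hLHS, hRHS]
  -- now a pure multiset computation
  have hcardμ : μ.card = N := charpoly_roots_card A
  have hcardρ : ρ.card = k := hqcard
  have hswap : (ρ.map fun y => (μ.map fun m => y - m).prod).prod
      = (μ.map fun m => (ρ.map fun y => y - m).prod).prod :=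
    Multiset.prod_map_prod_map ρ μ
  calc (-1 : ℂ) ^ N * (ρ.map fun y => (-1) ^ N * (μ.map fun m => y - m).prod).prod
      = (-1) ^ N * (((-1 : ℂ) ^ N) ^ k * (ρ.map fun y => (μ.map fun m => y - m).prod).prod) := by
        rw [Multiset.prod_map_mul]
        congr 2
        simp [Multiset.map_const', hcardρ]
    _ = (-1) ^ N * (((-1 : ℂ) ^ k) ^ N * (μ.map fun m => (ρ.map fun y => y - m).prod).prod) := by
        rw [hswap, ← pow_mul, ← pow_mul, Nat.mul_comm]
    _ = (μ.map fun m => -((ρ.map fun y => m - y).prod)).prod := by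
        have : ∀ m : ℂ, -((ρ.map fun y => m - y).prod)
            = -1 * ((-1 : ℂ) ^ k * (ρ.map fun y => y - m).prod) := by
          intro m
          rw [show (ρ.map fun y => m - y) = (ρ.map fun y => -1 * (y - m)) by
            apply Multiset.map_congr rfl; intros; ring]
          rw [Multiset.prod_map_mul]
          simp [Multiset.map_const', hcardρ]
        rw [Multiset.map_congr rfl fun m _ => this m, Multiset.prod_map_mul,
          Multiset.prod_map_mul]
        simp [Multiset.map_const', hcardμ]

lemma trace_pow_eq (A : Matrix n n ℂ) (k : ℕ) (hk : 1 ≤ k) :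
    (A ^ k).trace = (A.charpoly.roots.map (· ^ k)).sum := by
  rw [Matrix.trace_eq_sum_roots_charpoly, charpoly_pow A k hk,
    show (A.charpoly.roots.map fun m => X - C (m ^ k))
      = ((A.charpoly.roots.map (· ^ k)).map fun a => X - C a) by
        rw [Multiset.map_map]; rfl,
    Polynomial.roots_multiset_prod_X_sub_C]

lemma mem_spectrum_iff_mem_roots (A : Matrix n n ℂ) (z : ℂ) :
    z ∈ spectrum ℂ A ↔ z ∈ A.charpoly.roots := by
  rw [spectrum.mem_iff, Polynomial.mem_roots ((Matrix.charpoly_monic A).ne_zero),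
    Polynomial.IsRoot, charpoly_eval', Algebra.algebraMap_eq_smul_one,
    Matrix.isUnit_iff_isUnit_det, isUnit_iff_ne_zero]
  tauto

end Helpers

section Main
open Polynomial Matrix Filter

/-- Linear-algebra form of the weight argument in the proof of
Proposition 2.1: a complex square matrix whose eigenvalues all have absolute
value at most 1 and whose powers all have integer trace has a periodic trace
sequence, all its nonzero eigenvalues are roots of unity, and its trace is
bounded by the limsup of the traces of its powers. -/
theorem trace_sequence_of_integer_matrix_weight_le_zero
    {n : Type*} [Fintype n] [DecidableEq n] (A : Matrix n n ℂ)
    (heig : ∀ μ ∈ spectrum ℂ A, ‖μ‖ ≤ 1)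
    (hint : ∀ k : ℕ, 1 ≤ k → ∃ z : ℤ, (A ^ k).trace = (z : ℂ)) :
    (∃ d : ℕ, 0 < d ∧ ∀ k : ℕ, 1 ≤ k → (A ^ (k + d)).trace = (A ^ k).trace) ∧
    (∀ μ ∈ spectrum ℂ A, μ ≠ 0 → ∃ d : ℕ, 0 < d ∧ μ ^ d = 1) ∧
    ‖A.trace‖ ≤
      limsup (fun k : ℕ => ‖(A ^ k).trace‖) atTop := by
  classical
  set N := Fintype.card n with hN
  set μs : Multiset ℂ := A.charpoly.roots with hμs
  have htr : ∀ k, 1 ≤ k → (A ^ k).trace = (μs.map (· ^ k)).sum := trace_pow_eq A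
  have habs : ∀ m ∈ μs, ‖m‖ ≤ 1 :=
    fun m hm => heig m ((mem_spectrum_iff_mem_roots A m).mpr hm)
  -- integer values
  choose f hf using hint
  set T : ℕ → ℤ := fun k => if h : 1 ≤ k then f k h else 0 with hTdef
  have hT : ∀ k (h : 1 ≤ k), (A ^ k).trace = (T k : ℂ) := by
    intro k h; simp only [hTdef, dif_pos h]; exact hf k h
  -- bound on traces
  have hbound : ∀ k, 1 ≤ k → ‖(A ^ k).trace‖ ≤ N := by
    intro k hk
    rw [htr k hk]
    calc ‖(μs.map (· ^ k)).sum‖ ≤ ((μs.map (· ^ k)).map norm).sum := norm_multiset_sum_le _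
      _ ≤ (Multiset.card ((μs.map (· ^ k)).map norm)) • (1 : ℝ) := by
          apply Multiset.sum_le_card_nsmul
          intro x hx
          simp only [Multiset.mem_map] at hx
          obtain ⟨y, ⟨m, hm, rfl⟩, rfl⟩ := hx
          rw [norm_pow]
          exact pow_le_one₀ (norm_nonneg _) (habs m hm)
      _ ≤ N := by
          simp [charpoly_roots_card A, ← hμs, ← hN]
          exact (charpoly_roots_card A).le
  have hTb : ∀ m, 1 ≤ m → T m ∈ Finset.Icc (-(N : ℤ)) (N : ℤ) := by
    intro m hm
    rw [Finset.mem_Icc, ← abs_le]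
    have h1 : ‖((T m : ℂ))‖ ≤ N := hT m hm ▸ hbound m hm
    rw [show ((T m : ℤ) : ℂ) = ((T m : ℝ) : ℂ) by push_cast; ring, Complex.norm_real, Real.norm_eq_abs] at h1
    exact_mod_cast h1
  -- distinct nonzero eigenvalues
  set s : Finset ℂ := μs.toFinset.filter (fun x => x ≠ 0) with hs
  set c : ℂ → ℕ := fun x => μs.count x with hc
  have hsum : ∀ k, 1 ≤ k → (μs.map (· ^ k)).sum = ∑ x ∈ s, (c x : ℂ) * x ^ k := by
    intro k hk
    rw [Finset.sum_multiset_map_count]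
    rw [← Finset.sum_filter_of_ne (p := fun x => x ≠ 0)]
    · apply Finset.sum_congr rfl
      intro x _
      rw [nsmul_eq_mul]
    · intro x _ hx
      intro h0
      apply hx
      rw [h0, zero_pow (by omega), smul_zero]
  -- pigeonhole
  set Nc := s.card with hNc
  set F : ℕ → (Fin Nc → (Finset.Icc (-(N : ℤ)) (N : ℤ))) :=
    fun j i => ⟨T (j + 1 + i), hTb _ (by omega)⟩ with hF
  obtain ⟨a, b, hab, hFab⟩ := Finite.exists_ne_map_eq_of_infinite F
  wlog hlt : a < b generalizing a b
  · exact this b a (Ne.symm hab) hFab.symm (by omega)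
  set d := b - a with hd
  have hdpos : 0 < d := by omega
  set k1 := a + 1 with hk1
  have hTeq : ∀ i : Fin Nc, T (k1 + (i : ℕ)) = T (k1 + d + (i : ℕ)) := by
    intro i
    have := congrFun hFab i
    rw [Subtype.ext_iff] at this
    simpa [hF, show b + 1 + (i : ℕ) = k1 + d + (i : ℕ) by omega,
      show a + 1 + (i : ℕ) = k1 + (i : ℕ) by omega] using this
  -- Vandermonde
  set e : Fin Nc ≃ {x // x ∈ s} := s.equivFin.symm with he
  set v : Fin Nc → ℂ := fun i => (e i : ℂ) with hv
  have hvinj : Function.Injective v := fun i j hij => by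
    apply e.injective; exact Subtype.ext hij
  set w : Fin Nc → ℂ := fun j => (c (v j) : ℂ) * (v j) ^ k1 * ((v j) ^ d - 1) with hw
  have hsum_equiv : ∀ (g : ℂ → ℂ), ∑ x ∈ s, g x = ∑ j : Fin Nc, g (v j) := by
    intro g
    rw [← Finset.sum_coe_sort s g]
    exact (Equiv.sum_comp e (fun x => g (x : ℂ))).symm
  have hmv : (Matrix.vandermonde v)ᵀ.mulVec w = 0 := by
    funext i
    have h1 : (A ^ (k1 + d + (i : ℕ))).trace - (A ^ (k1 + (i : ℕ))).trace = 0 := by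
      rw [hT _ (by omega), hT _ (by omega), ← hTeq i, sub_self]
    rw [htr _ (by omega), htr _ (by omega), hsum _ (by omega), hsum _ (by omega),
      hsum_equiv, hsum_equiv, ← Finset.sum_sub_distrib] at h1
    simp only [Matrix.mulVec, dotProduct, Matrix.transpose_apply,
      Matrix.vandermonde, Pi.zero_apply]
    rw [← h1]
    apply Finset.sum_congr rfl
    intro j _
    simp only [hw, Matrix.of_apply]
    rw [pow_add, pow_add, pow_add]
    ring
  have hw0 : w = 0 := by
    apply Matrix.eq_zero_of_mulVec_eq_zero _ hmv
    rw [Matrix.det_transpose]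
    exact Matrix.det_vandermonde_ne_zero_iff.mpr hvinj
  have hroot : ∀ x ∈ s, x ^ d = 1 := by
    intro x hx
    set j := s.equivFin ⟨x, hx⟩ with hj
    have hvj : v j = x := by simp [hv, he, hj]
    have := congrFun hw0 j
    rw [hw] at this
    simp only [Pi.zero_apply, hvj] at this
    have hx0 : x ≠ 0 := (Finset.mem_filter.mp hx).2
    have hcx : (c x : ℂ) ≠ 0 := by
      simp only [hc, Ne, Nat.cast_eq_zero, Multiset.count_eq_zero]
      intro hmem
      exact hmem (Multiset.mem_toFinset.mp (Finset.mem_filter.mp hx).1)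
    have := mul_eq_zero.mp this
    rcases this with h | h
    · rcases mul_eq_zero.mp h with h' | h'
      · exact absurd h' hcx
      · exact absurd h' (pow_ne_zero _ hx0)
    · linear_combination h
  -- part (a)
  have hper : ∀ k, 1 ≤ k → (A ^ (k + d)).trace = (A ^ k).trace := by
    intro k hk
    rw [htr _ (by omega), htr _ hk, hsum _ (by omega), hsum _ hk]
    apply Finset.sum_congr rfl
    intro x hx
    rw [pow_add, hroot x hx, mul_one]
  refine ⟨⟨d, hdpos, hper⟩, ?_, ?_⟩
  · intro μ hμ hμ0
    refine ⟨d, hdpos, hroot μ ?_⟩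
    rw [hs, Finset.mem_filter, Multiset.mem_toFinset]
    exact ⟨(mem_spectrum_iff_mem_roots A μ).mp hμ, hμ0⟩
  · -- part (c)
    have h1 : ∀ m : ℕ, (A ^ (1 + m * d)).trace = A.trace := by
      intro m
      induction m with
      | zero => simp
      | succ m ih =>
        rw [show 1 + (m + 1) * d = (1 + m * d) + d by ring, hper _ (by omega), ih]
    apply Filter.le_limsup_of_frequently_le
    · rw [Filter.frequently_atTop]
      intro a0
      refine ⟨1 + a0 * d, by nlinarith [hdpos], ?_⟩
      rw [h1 a0]
    · refine Filter.isBoundedUnder_of ⟨(N : ℝ), ?_⟩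
      intro k
      rcases Nat.eq_zero_or_pos k with rfl | hk
      · simp [Matrix.trace_one, hN]
      · exact hbound k hk

end Main
end
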